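/- arXiv:1905.09696 — 3 statements merged into one kernel-verified Lean document; each statement's English description precedes it below -/
import Mathlib

section
/- Let $A$ be a positive definite symmetric $n \times n$ real matrix with $n \geq 2$, and let $S_{n-1}(A)$ denote the $(n-1)$-st elementary symmetric function of the eigenvalues of $A$ (equivalently, the trace of the cofactor matrix of $A$). Then $S_{n-1}(A) \geq (\operatorname{trace} A)^{\frac{1}{n-1}} (\det A)^{\frac{n-2}{n-1}}$. -/
open Finset in
lemma comb {ι : Type*} [DecidableEq ι] (s : Finset ι) (hne : s.Nonempty) (y : ι → ℝ)
    (hy : ∀ i, 0 ≤ y i) :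
    ∑ i ∈ s, ∏ j ∈ s.erase i, y j ≤ (∑ i ∈ s, y i) ^ (s.card - 1) := by
  induction hne using Finset.Nonempty.cons_induction with
  | singleton a => simp
  | cons a s ha hs IH =>
    have hS : (0:ℝ) ≤ ∑ i ∈ s, y i := Finset.sum_nonneg fun i _ => hy i
    obtain ⟨m, hm⟩ : ∃ m, s.card = m + 1 :=
      ⟨s.card - 1, (Nat.succ_pred_eq_of_pos hs.card_pos).symm⟩
    have hcard : (Finset.cons a s ha).card - 1 = m + 1 := by
      rw [Finset.card_cons, hm]
      rfl
    rw [Finset.sum_cons, Finset.sum_cons, Finset.erase_cons, hcard]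
    have step1 : ∑ i ∈ s, ∏ j ∈ (Finset.cons a s ha).erase i, y j
        = ∑ i ∈ s, y a * ∏ j ∈ s.erase i, y j := by
      refine Finset.sum_congr rfl fun i hi => ?_
      have hai : a ≠ i := fun h => ha (h ▸ hi)
      rw [Finset.cons_eq_insert, Finset.erase_insert_of_ne hai,
        Finset.prod_insert (fun h => ha (Finset.mem_of_mem_erase h))]
    rw [step1, ← Finset.mul_sum]
    have h1 : ∏ j ∈ s, y j ≤ (∑ i ∈ s, y i) ^ (m + 1) := by
      calc ∏ j ∈ s, y j ≤ ∏ _j ∈ s, (∑ i ∈ s, y i) :=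
            Finset.prod_le_prod (fun i _ => hy i)
              (fun i hi => Finset.single_le_sum (fun j _ => hy j) hi)
        _ = (∑ i ∈ s, y i) ^ (m + 1) := by rw [Finset.prod_const, hm]
    have h2 : y a * ∑ i ∈ s, ∏ j ∈ s.erase i, y j ≤ y a * (∑ i ∈ s, y i) ^ m := by
      have := IH
      rw [hm] at this
      exact mul_le_mul_of_nonneg_left (by simpa using this) (hy a)
    calc (∏ j ∈ s, y j) + y a * ∑ i ∈ s, ∏ j ∈ s.erase i, y j
        ≤ (∑ i ∈ s, y i) ^ (m + 1) + y a * (∑ i ∈ s, y i) ^ m := add_le_add h1 h2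
      _ = ((∑ i ∈ s, y i) + y a) * (∑ i ∈ s, y i) ^ m := by ring
      _ ≤ ((∑ i ∈ s, y i) + y a) * ((∑ i ∈ s, y i) + y a) ^ m := by
          apply mul_le_mul_of_nonneg_left (pow_le_pow_left₀ hS (by linarith [hy a]) m) (by linarith [hy a])
      _ = (y a + ∑ i ∈ s, y i) ^ (m + 1) := by ring

theorem stmt_2 (n : ℕ) (hn : 2 ≤ n) (A : Matrix (Fin n) (Fin n) ℝ)
    (hsymm : A.IsSymm) (hpos : A.PosDef) :
    A.adjugate.trace ≥ A.trace ^ ((1 : ℝ) / (n - 1)) * A.det ^ (((n : ℝ) - 2) / ((n : ℝ) - 1)) := by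
  have hH : A.IsHermitian := hpos.1
  set lam : Fin n → ℝ := hH.eigenvalues with hlam
  have hl : ∀ i, 0 < lam i := hpos.eigenvalues_pos
  have hUU : star (hH.eigenvectorUnitary : Matrix (Fin n) (Fin n) ℝ) *
      (hH.eigenvectorUnitary : Matrix (Fin n) (Fin n) ℝ) = 1 :=
    (Matrix.mem_unitaryGroup_iff').mp hH.eigenvectorUnitary.2
  have hD : Matrix.diagonal (RCLike.ofReal ∘ lam) = Matrix.diagonal lam := by congr 1
  have hadj : A.adjugate.trace = ∑ i, ∏ j ∈ Finset.univ.erase i, lam j := by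
    conv_lhs => rw [hH.spectral_theorem]
    rw [hD, Unitary.conjStarAlgAut_apply, Matrix.adjugate_mul_distrib, Matrix.adjugate_mul_distrib,
      Matrix.trace_mul_comm, mul_assoc, ← Matrix.adjugate_mul_distrib, hUU,
      Matrix.adjugate_one, mul_one, Matrix.adjugate_diagonal, Matrix.trace_diagonal]
  have htr : A.trace = ∑ i, lam i := by
    conv_lhs => rw [hH.spectral_theorem]
    rw [hD, Unitary.conjStarAlgAut_apply, Matrix.trace_mul_cycle, hUU, one_mul, Matrix.trace_diagonal]
  have hdet : A.det = ∏ i, lam i := by simpa using hH.det_eq_prod_eigenvalues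
  set T : ℝ := ∑ i, lam i with hT
  set P : ℝ := ∏ i, lam i with hP
  have hT0 : 0 < T := Finset.sum_pos (fun i _ => hl i) ⟨⟨0, by omega⟩, Finset.mem_univ _⟩
  have hP0 : 0 < P := Finset.prod_pos (fun i _ => hl i)
  set mu : Fin n → ℝ := fun i => ∏ j ∈ Finset.univ.erase i, lam j with hmu
  have hmu0 : ∀ i, 0 < mu i := fun i => Finset.prod_pos (fun j _ => hl j)
  have hmuP : ∀ i, lam i * mu i = P := fun i =>
    Finset.mul_prod_erase Finset.univ lam (Finset.mem_univ i)
  set S : ℝ := ∑ i, mu i with hS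
  have hS0 : 0 < S := Finset.sum_pos (fun i _ => hmu0 i) ⟨⟨0, by omega⟩, Finset.mem_univ _⟩
  have hprodmu : ∏ j, mu j = P ^ (n - 1) := by
    calc ∏ j, mu j = ∏ j, (P / lam j) := by
          refine Finset.prod_congr rfl fun j _ => ?_
          rw [eq_div_iff (hl j).ne', mul_comm]
          exact hmuP j
      _ = P ^ n / P := by
          rw [Finset.prod_div_distrib, Finset.prod_const, Finset.card_univ, Fintype.card_fin, hP]
      _ = P ^ (n - 1) := by
          rw [eq_comm, eq_div_iff hP0.ne', ← pow_succ]
          congr 1; omega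
  have hinner : ∀ i : Fin n, ∏ j ∈ Finset.univ.erase i, mu j = lam i * P ^ (n - 2) := by
    intro i
    have e1 : mu i * ∏ j ∈ Finset.univ.erase i, mu j = P ^ (n - 1) := by
      rw [Finset.mul_prod_erase Finset.univ mu (Finset.mem_univ i)]
      exact hprodmu
    have h1 : P * ∏ j ∈ Finset.univ.erase i, mu j = P * (lam i * P ^ (n - 2)) := by
      calc P * ∏ j ∈ Finset.univ.erase i, mu j
          = lam i * (mu i * ∏ j ∈ Finset.univ.erase i, mu j) := by rw [← hmuP i]; ring
        _ = lam i * P ^ (n - 1) := by rw [e1]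
        _ = P * (lam i * P ^ (n - 2)) := by
            have hp : P ^ (n - 1) = P * P ^ (n - 2) := by
              rw [← pow_succ']; congr 1; omega
            rw [hp]; ring
    exact mul_left_cancel₀ hP0.ne' h1
  have key : T * P ^ (n - 2) ≤ S ^ (n - 1) := by
    have hc := comb Finset.univ ⟨⟨0, by omega⟩, Finset.mem_univ _⟩ mu (fun i => (hmu0 i).le)
    rw [Finset.card_univ, Fintype.card_fin] at hc
    calc T * P ^ (n - 2) = ∑ i, lam i * P ^ (n - 2) := by rw [hT, Finset.sum_mul]
      _ = ∑ i, ∏ j ∈ Finset.univ.erase i, mu j :=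
          Finset.sum_congr rfl fun i _ => (hinner i).symm
      _ ≤ S ^ (n - 1) := hc
  rw [ge_iff_le, htr, hdet, hadj]
  have ha0 : (0:ℝ) < (n:ℝ) - 1 := by
    have : (2:ℝ) ≤ n := by exact_mod_cast hn
    linarith
  have hcast2 : ((n:ℝ) - 2) = ((n - 2 : ℕ) : ℝ) := by
    rw [Nat.cast_sub hn]; norm_num
  have hcast1 : ((n:ℝ) - 1) = ((n - 1 : ℕ) : ℝ) := by
    rw [Nat.cast_sub (by omega : 1 ≤ n)]; norm_num
  have hrw : T ^ ((1 : ℝ) / ((n:ℝ) - 1)) * P ^ (((n : ℝ) - 2) / ((n : ℝ) - 1))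
      = (T * P ^ (n - 2 : ℕ)) ^ ((1:ℝ) / ((n:ℝ) - 1)) := by
    rw [Real.mul_rpow hT0.le (by positivity), ← Real.rpow_natCast P (n - 2),
      ← Real.rpow_mul hP0.le, ← hcast2]
    ring_nf
  calc T ^ ((1 : ℝ) / ((n:ℝ) - 1)) * P ^ (((n : ℝ) - 2) / ((n : ℝ) - 1))
      = (T * P ^ (n - 2 : ℕ)) ^ ((1:ℝ) / ((n:ℝ) - 1)) := hrw
    _ ≤ (S ^ (n - 1 : ℕ)) ^ ((1:ℝ) / ((n:ℝ) - 1)) :=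
        Real.rpow_le_rpow (by positivity) key (by positivity)
    _ = S := by
        rw [← Real.rpow_natCast S (n - 1), ← Real.rpow_mul hS0.le, ← hcast1,
          mul_one_div, div_self ha0.ne', Real.rpow_one]
end

section
/- Let $n \geq 2$, $1 < p < n$, and $\psi > 0$. Define $H(t) = \int_0^t e^{\frac{1}{p} s^p} s^{n-1} \, ds$ and $I(t) = \frac{1}{n\psi} e^{\frac{t^p}{p}}$. Then there exists exactly one $t > 0$ with $H(t) = I(t)$. -/
open Real Set intervalIntegral MeasureTheory

private lemma cont_aux {p r : ℝ} (hp : 0 < p) (hr : 0 ≤ r) :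
    Continuous fun s : ℝ => Real.exp (s ^ p / p) * s ^ r := by
  rw [continuous_iff_continuousAt]
  intro x
  exact (Real.continuous_exp.continuousAt.comp
      ((Real.continuousAt_rpow_const x p (Or.inr hp.le)).div_const p)).mul
    (Real.continuousAt_rpow_const x r (Or.inr hr))

private lemma exp_deriv_aux {p : ℝ} (hp : 1 < p) (x : ℝ) :
    HasDerivAt (fun t : ℝ => Real.exp (t ^ p / p)) (Real.exp (x ^ p / p) * x ^ (p - 1)) x := by
  have hp0 : p ≠ 0 := ne_of_gt (lt_trans one_pos hp)
  have h0 : HasDerivAt (fun t : ℝ => t ^ p) (p * x ^ (p - 1)) x :=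
    Real.hasDerivAt_rpow_const (Or.inr hp.le)
  have h1 := (h0.div_const p).exp
  rwa [mul_div_cancel_left₀ _ hp0] at h1

private lemma integ_exp_aux {p : ℝ} (hp : 1 < p) (a b : ℝ) :
    (∫ s in a..b, Real.exp (s ^ p / p) * s ^ (p - 1)) =
      Real.exp (b ^ p / p) - Real.exp (a ^ p / p) :=
  intervalIntegral.integral_eq_sub_of_hasDerivAt (fun x _ => exp_deriv_aux hp x)
    ((cont_aux (lt_trans one_pos hp) (by linarith)).intervalIntegrable a b)

private noncomputable def Ffun (p q K t : ℝ) : ℝ :=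
  (∫ s in (0:ℝ)..t, Real.exp (s ^ p / p) * s ^ (q - 1)) - K * Real.exp (t ^ p / p)

private lemma Ffun_hasDerivAt {p q K : ℝ} (hp : 1 < p) (hq : 1 < q) {x : ℝ} (hx : 0 < x) :
    HasDerivAt (Ffun p q K)
      (Real.exp (x ^ p / p) * x ^ (p - 1) * (x ^ (q - p) - K)) x := by
  have hfc : Continuous fun s : ℝ => Real.exp (s ^ p / p) * s ^ (q - 1) :=
    cont_aux (lt_trans one_pos hp) (by linarith)
  have h1 : HasDerivAt (fun t : ℝ => ∫ s in (0:ℝ)..t, Real.exp (s ^ p / p) * s ^ (q - 1))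
      (Real.exp (x ^ p / p) * x ^ (q - 1)) x :=
    intervalIntegral.integral_hasDerivAt_right (hfc.intervalIntegrable 0 x)
      (hfc.stronglyMeasurableAtFilter _ _) hfc.continuousAt
  have h2 := (exp_deriv_aux hp x).const_mul K
  have h3 := h1.sub h2
  convert h3 using 1
  · rfl
  · rfl
  · rfl
  have hsplit : x ^ (q - 1) = x ^ (p - 1) * x ^ (q - p) := by
    rw [← Real.rpow_add hx, show p - 1 + (q - p) = q - 1 by ring]
  rw [hsplit]; ring

private lemma Ffun_neg {p q K : ℝ} (hp : 1 < p) (hq : p < q) (hK : 0 < K)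
    {t : ℝ} (ht : 0 < t) (htc : t ≤ K ^ (q - p)⁻¹) : Ffun p q K t < 0 := by
  have hp0 : (0:ℝ) < p := lt_trans one_pos hp
  have hqp : (0:ℝ) < q - p := by linarith
  have hq1 : (1:ℝ) < q := by linarith
  have hcK : (K ^ (q - p)⁻¹) ^ (q - p) = K := Real.rpow_inv_rpow hK.le (ne_of_gt hqp)
  have hfc : Continuous fun s : ℝ => Real.exp (s ^ p / p) * s ^ (q - 1) :=
    cont_aux hp0 (by linarith)
  have hgc : Continuous fun s : ℝ => K * (Real.exp (s ^ p / p) * s ^ (p - 1)) :=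
    continuous_const.mul (cont_aux hp0 (by linarith : (0:ℝ) ≤ p - 1))
  have key : ∀ s ∈ Icc (0:ℝ) t,
      Real.exp (s ^ p / p) * s ^ (q - 1) ≤ K * (Real.exp (s ^ p / p) * s ^ (p - 1)) := by
    rintro s ⟨hs0, hst⟩
    rcases eq_or_lt_of_le hs0 with h | h
    · rw [← h, Real.zero_rpow (by linarith : q - 1 ≠ 0),
        Real.zero_rpow (by linarith : p - 1 ≠ 0)]
      simp
    · have hsK : s ^ (q - p) ≤ K := by
        calc s ^ (q - p) ≤ (K ^ (q - p)⁻¹) ^ (q - p) :=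
              Real.rpow_le_rpow hs0 (hst.trans htc) hqp.le
          _ = K := hcK
      have hsplit : s ^ (q - 1) = s ^ (p - 1) * s ^ (q - p) := by
        rw [← Real.rpow_add h, show p - 1 + (q - p) = q - 1 by ring]
      rw [hsplit]
      have h1 : (0:ℝ) < Real.exp (s ^ p / p) := Real.exp_pos _
      have h2 : (0:ℝ) ≤ s ^ (p - 1) := Real.rpow_nonneg hs0 _
      calc Real.exp (s ^ p / p) * (s ^ (p - 1) * s ^ (q - p))
          = Real.exp (s ^ p / p) * s ^ (p - 1) * s ^ (q - p) := by ring
        _ ≤ Real.exp (s ^ p / p) * s ^ (p - 1) * K :=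
            mul_le_mul_of_nonneg_left hsK (mul_nonneg h1.le h2)
        _ = K * (Real.exp (s ^ p / p) * s ^ (p - 1)) := by ring
  have h1 : (∫ s in (0:ℝ)..t, Real.exp (s ^ p / p) * s ^ (q - 1)) ≤
      ∫ s in (0:ℝ)..t, K * (Real.exp (s ^ p / p) * s ^ (p - 1)) :=
    intervalIntegral.integral_mono_on ht.le (hfc.intervalIntegrable 0 t)
      (hgc.intervalIntegrable 0 t) key
  have h2 : (∫ s in (0:ℝ)..t, K * (Real.exp (s ^ p / p) * s ^ (p - 1))) =
      K * (Real.exp (t ^ p / p) - 1) := by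
    rw [intervalIntegral.integral_const_mul, integ_exp_aux hp,
      Real.zero_rpow (ne_of_gt hp0), zero_div, Real.exp_zero]
  rw [Ffun]
  rw [h2] at h1
  linarith

theorem stmt_10 (n : ℕ) (hn : 2 ≤ n) (p : ℝ) (hp1 : 1 < p) (hpn : p < n) (ψ : ℝ) (hψ : 0 < ψ) :
    ∃! t : ℝ, 0 < t ∧
      (∫ s in (0 : ℝ)..t, Real.exp (s ^ p / p) * s ^ ((n : ℝ) - 1)) =
        1 / (n * ψ) * Real.exp (t ^ p / p) := by
  have hn2 : (2:ℝ) ≤ (n:ℝ) := by exact_mod_cast hn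
  have hp0 : (0:ℝ) < p := lt_trans one_pos hp1
  set q : ℝ := (n:ℝ) with hqdef
  have hq1 : (1:ℝ) < q := by linarith
  have hqp : (0:ℝ) < q - p := by linarith
  set K : ℝ := 1 / ((n:ℝ) * ψ) with hKdef
  have hK : 0 < K := by
    apply div_pos one_pos
    have : (0:ℝ) < (n:ℝ) := by linarith
    exact mul_pos this hψ
  set c : ℝ := K ^ (q - p)⁻¹ with hcdef
  have hc0 : 0 < c := Real.rpow_pos_of_pos hK _
  have hcK : c ^ (q - p) = K := Real.rpow_inv_rpow hK.le (ne_of_gt hqp)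
  set b : ℝ := (2 * K) ^ (q - p)⁻¹ with hbdef
  have hb0 : 0 < b := Real.rpow_pos_of_pos (by linarith) _
  have hbK : b ^ (q - p) = 2 * K := Real.rpow_inv_rpow (by linarith) (ne_of_gt hqp)
  have hcb : c ≤ b :=
    Real.rpow_le_rpow hK.le (by linarith) (inv_nonneg.2 hqp.le)
  have hfc : Continuous fun s : ℝ => Real.exp (s ^ p / p) * s ^ (q - 1) :=
    cont_aux hp0 (by linarith)
  -- continuity of F on Ici c
  have hFca : ∀ x ∈ Ici c, ContinuousAt (Ffun p q K) x := fun x hx =>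
    (Ffun_hasDerivAt hp1 hq1 (lt_of_lt_of_le hc0 hx)).continuousAt
  -- strict monotonicity on Ici c
  have hmono : StrictMonoOn (Ffun p q K) (Ici c) := by
    apply strictMonoOn_of_deriv_pos (convex_Ici c)
      (fun x hx => (hFca x hx).continuousWithinAt)
    intro x hx
    rw [interior_Ici] at hx
    have hx0 : 0 < x := hc0.trans hx
    rw [(Ffun_hasDerivAt hp1 hq1 hx0).deriv]
    have hKx : K < x ^ (q - p) := by
      rw [← hcK]; exact Real.rpow_lt_rpow hc0.le hx hqp
    have h1 : (0:ℝ) < Real.exp (x ^ p / p) := Real.exp_pos _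
    have h2 : (0:ℝ) < x ^ (p - 1) := Real.rpow_pos_of_pos hx0 _
    exact mul_pos (mul_pos h1 h2) (sub_pos.2 hKx)
  -- choose T with F T > 0
  set T : ℝ := (b ^ p + p * (Real.log 2 + 1)) ^ p⁻¹ with hTdef
  have hlog2 : (0:ℝ) < Real.log 2 + 1 := by
    have := Real.log_nonneg (by norm_num : (1:ℝ) ≤ 2); linarith
  have hbase : (0:ℝ) ≤ b ^ p + p * (Real.log 2 + 1) := by
    have := Real.rpow_nonneg hb0.le p
    nlinarith
  have hTp : T ^ p = b ^ p + p * (Real.log 2 + 1) :=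
    Real.rpow_inv_rpow hbase (ne_of_gt hp0)
  have hT0 : 0 ≤ T := Real.rpow_nonneg hbase _
  have hbT : b < T := by
    by_contra h
    push_neg at h
    have : T ^ p ≤ b ^ p := Real.rpow_le_rpow hT0 h hp0.le
    rw [hTp] at this
    nlinarith
  have hexpT : Real.exp (T ^ p / p) = 2 * Real.exp 1 * Real.exp (b ^ p / p) := by
    rw [hTp, add_div, mul_div_cancel_left₀ _ (ne_of_gt hp0), Real.exp_add, Real.exp_add,
      Real.exp_log (by norm_num : (0:ℝ) < 2)]
    ring
  have hFT : 0 < Ffun p q K T := by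
    have hsplit : (∫ s in (0:ℝ)..T, Real.exp (s ^ p / p) * s ^ (q - 1)) =
        (∫ s in (0:ℝ)..b, Real.exp (s ^ p / p) * s ^ (q - 1)) +
          ∫ s in b..T, Real.exp (s ^ p / p) * s ^ (q - 1) :=
      (intervalIntegral.integral_add_adjacent_intervals (hfc.intervalIntegrable 0 b)
        (hfc.intervalIntegrable b T)).symm
    have hI1 : 0 ≤ ∫ s in (0:ℝ)..b, Real.exp (s ^ p / p) * s ^ (q - 1) :=
      intervalIntegral.integral_nonneg hb0.le fun u hu =>
        mul_nonneg (Real.exp_pos _).le (Real.rpow_nonneg hu.1 _)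
    have key2 : ∀ s ∈ Icc b T,
        2 * K * (Real.exp (s ^ p / p) * s ^ (p - 1)) ≤ Real.exp (s ^ p / p) * s ^ (q - 1) := by
      rintro s ⟨hbs, hsT⟩
      have hs0 : 0 < s := lt_of_lt_of_le hb0 hbs
      have hsK : 2 * K ≤ s ^ (q - p) := by
        rw [← hbK]; exact Real.rpow_le_rpow hb0.le hbs hqp.le
      have hsplit' : s ^ (q - 1) = s ^ (p - 1) * s ^ (q - p) := by
        rw [← Real.rpow_add hs0, show p - 1 + (q - p) = q - 1 by ring]
      rw [hsplit']
      have h1 : (0:ℝ) < Real.exp (s ^ p / p) := Real.exp_pos _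
      have h2 : (0:ℝ) ≤ s ^ (p - 1) := Real.rpow_nonneg hs0.le _
      calc 2 * K * (Real.exp (s ^ p / p) * s ^ (p - 1))
          = Real.exp (s ^ p / p) * s ^ (p - 1) * (2 * K) := by ring
        _ ≤ Real.exp (s ^ p / p) * s ^ (p - 1) * s ^ (q - p) :=
            mul_le_mul_of_nonneg_left hsK (mul_nonneg h1.le h2)
        _ = Real.exp (s ^ p / p) * (s ^ (p - 1) * s ^ (q - p)) := by ring
    have hI2 : (∫ s in b..T, 2 * K * (Real.exp (s ^ p / p) * s ^ (p - 1))) ≤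
        ∫ s in b..T, Real.exp (s ^ p / p) * s ^ (q - 1) :=
      intervalIntegral.integral_mono_on hbT.le
        ((continuous_const.mul (cont_aux hp0 (by linarith : (0:ℝ) ≤ p - 1))).intervalIntegrable b T)
        (hfc.intervalIntegrable b T) key2
    have hI2' : (∫ s in b..T, 2 * K * (Real.exp (s ^ p / p) * s ^ (p - 1))) =
        2 * K * (Real.exp (T ^ p / p) - Real.exp (b ^ p / p)) := by
      rw [intervalIntegral.integral_const_mul, integ_exp_aux hp1]
    rw [Ffun, hsplit]
    rw [hI2'] at hI2
    have he1 : (1:ℝ) < Real.exp 1 := by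
      rw [Real.one_lt_exp_iff]; norm_num
    have hexpb : (0:ℝ) < Real.exp (b ^ p / p) := Real.exp_pos _
    have h3 : K * Real.exp (T ^ p / p) - 2 * K * Real.exp (b ^ p / p) =
        2 * K * Real.exp (b ^ p / p) * (Real.exp 1 - 1) := by
      rw [hexpT]; ring
    have h4 : 0 < 2 * K * Real.exp (b ^ p / p) * (Real.exp 1 - 1) :=
      mul_pos (mul_pos (by linarith) hexpb) (by linarith)
    linarith
  -- IVT
  have hcT : c ≤ T := hcb.trans hbT.le
  have hcont : ContinuousOn (Ffun p q K) (Icc c T) := fun x hx =>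
    (hFca x hx.1).continuousWithinAt
  have hFc0 : Ffun p q K c < 0 := Ffun_neg hp1 (by linarith) hK hc0 le_rfl
  obtain ⟨t0, ht0mem, hFt0⟩ :=
    intermediate_value_Icc hcT hcont (show (0:ℝ) ∈ Icc (Ffun p q K c) (Ffun p q K T) from
      ⟨hFc0.le, hFT.le⟩)
  have ht0pos : 0 < t0 := lt_of_lt_of_le hc0 ht0mem.1
  refine ⟨t0, ⟨ht0pos, ?_⟩, ?_⟩
  · have := hFt0
    rw [Ffun] at this
    linarith
  · rintro y ⟨hy0, hyeq⟩
    have hFy : Ffun p q K y = 0 := by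
      rw [Ffun, hyeq]; ring
    have hyc : c ≤ y := by
      by_contra h
      push_neg at h
      exact absurd hFy (ne_of_lt (Ffun_neg hp1 (by linarith) hK hy0 h.le))
    exact hmono.injOn (mem_Ici.2 hyc) (mem_Ici.2 ht0mem.1) (hFy.trans hFt0.symm)
end

section
/- Let $n \geq 2$ and $p > 1$. Define $H(t) = \int_0^t e^{\frac{1}{p} s^p} s^{n-1} \, ds$ and, for $\psi > 0$, $I_\psi(t) = \frac{1}{n\psi} e^{\frac{t^p}{p}}$. Suppose $t_0 > 0$ is a point with $H(t_0) = I_\psi(t_0)$ and $H'(t_0) \geq I_\psi'(t_0)$. Then $t_0^{n-p} \geq \frac{1}{n\psi}$, and for every $t > t_0$, $H(t) > I_\psi(t)$. -/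
theorem stmt_15 (n : ℕ) (hn : 2 ≤ n) (p : ℝ) (hp : 1 < p) (hpn : p < n) (ψ : ℝ) (hψ : 0 < ψ)
    (t0 : ℝ) (ht0 : 0 < t0)
    (heq : (∫ s in (0 : ℝ)..t0, Real.exp (s ^ p / p) * s ^ ((n : ℝ) - 1)) =
      1 / (n * ψ) * Real.exp (t0 ^ p / p))
    (hderiv : Real.exp (t0 ^ p / p) * t0 ^ ((n : ℝ) - 1) ≥
      1 / (n * ψ) * (Real.exp (t0 ^ p / p) * t0 ^ (p - 1))) :
    t0 ^ ((n : ℝ) - p) ≥ 1 / (n * ψ) ∧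
      ∀ t : ℝ, t0 < t →
        (∫ s in (0 : ℝ)..t, Real.exp (s ^ p / p) * s ^ ((n : ℝ) - 1)) >
          1 / (n * ψ) * Real.exp (t ^ p / p) := by
  have hp0 : (0:ℝ) < p := lt_trans one_pos hp
  set c : ℝ := 1 / (n * ψ) with hc
  have hnp : (0:ℝ) < (n:ℝ) - p := by linarith
  have hsplit : ∀ x : ℝ, 0 < x → x ^ ((n:ℝ)-1) = x ^ (p-1) * x ^ ((n:ℝ)-p) := by
    intro x hx
    rw [← Real.rpow_add hx]
    ring_nf
  -- Part 1
  have h1 : t0 ^ ((n:ℝ)-p) ≥ c := by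
    have h := hderiv
    rw [hsplit t0 ht0] at h
    have hpos : 0 < Real.exp (t0^p/p) * t0^(p-1) :=
      mul_pos (Real.exp_pos _) (Real.rpow_pos_of_pos ht0 _)
    nlinarith [hpos]
  refine ⟨h1, ?_⟩
  -- Part 2
  set g : ℝ → ℝ := fun s => Real.exp (s ^ p / p) * s ^ ((n:ℝ)-1) with hg
  have hgc : Continuous g := by
    have h2 : Continuous fun s : ℝ => Real.exp (s ^ p / p) :=
      Real.continuous_exp.comp ((Real.continuous_rpow_const hp0.le).div_const p)
    exact h2.mul (Real.continuous_rpow_const (by linarith : (0:ℝ) ≤ (n:ℝ)-1))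
  set F : ℝ → ℝ := fun t => (∫ s in (0:ℝ)..t, g s) - c * Real.exp (t ^ p / p) with hF
  have hF' : ∀ x ∈ Set.Ici t0,
      HasDerivAt F (Real.exp (x^p/p) * x^(p-1) * (x^((n:ℝ)-p) - c)) x := by
    intro x hx
    have hx0 : 0 < x := lt_of_lt_of_le ht0 hx
    have hH : HasDerivAt (fun t => ∫ s in (0:ℝ)..t, g s) (g x) x :=
      intervalIntegral.integral_hasDerivAt_right (hgc.intervalIntegrable 0 x)
        (hgc.stronglyMeasurableAtFilter _ _) hgc.continuousAt
    have hq : HasDerivAt (fun t : ℝ => t ^ p / p) (x ^ (p-1)) x := by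
      have := (Real.hasDerivAt_rpow_const (p := p) (Or.inl hx0.ne')).div_const p
      have hne : p ≠ 0 := hp0.ne'
      simpa [mul_div_assoc, mul_comm, mul_div_cancel_left₀ _ hne] using this
    have hI : HasDerivAt (fun t : ℝ => Real.exp (t ^ p / p))
        (Real.exp (x ^ p / p) * x ^ (p-1)) x := hq.exp
    have h := hH.sub (hI.const_mul c)
    convert h using 1
    case e'_4 => rfl
    case e'_5 => rfl
    case e'_8 => rfl
    rw [hg]
    simp only []
    rw [hsplit x hx0]
    ring
  have hmono : StrictMonoOn F (Set.Ici t0) := by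
    apply strictMonoOn_of_deriv_pos (convex_Ici t0)
      (fun x hx => (hF' x hx).differentiableAt.continuousAt.continuousWithinAt)
    intro x hx
    rw [interior_Ici] at hx
    rw [(hF' x (Set.mem_Ici.mpr (le_of_lt hx))).deriv]
    have hx0 : 0 < x := lt_trans ht0 hx
    have hgt : t0 ^ ((n:ℝ)-p) < x ^ ((n:ℝ)-p) := Real.rpow_lt_rpow ht0.le hx hnp
    have : 0 < x ^ ((n:ℝ)-p) - c := by linarith
    positivity
  intro t ht
  have hFt0 : F t0 = 0 := by simp [hF, heq]
  have := hmono (Set.self_mem_Ici) (le_of_lt ht : t0 ≤ t) ht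
  rw [hFt0] at this
  have : 0 < (∫ s in (0:ℝ)..t, g s) - c * Real.exp (t ^ p / p) := this
  simpa [hg] using by linarith
end
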